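/- Suppose τ_r = τ_{rs} + τ_{r\s} and τ_s = τ_{rs} + τ_{s\r} where the decomposed parts are pairwise independent, Var(τ_r) = θ²τ̂_r², Var(τ_s) = θ²τ̂_s², Var(τ_{r\s}) = θ²τ̂_r·τ̂_{r\s}, and Var(τ_{s\r}) = θ²τ̂_s·τ̂_{s\r}, with τ̂_r = τ̂_{rs} + τ̂_{r\s} and τ̂_s = τ̂_{rs} + τ̂_{s\r}. Then Cov(τ_r, τ_s) = θ²·τ̂_{rs}·(τ̂_r + τ̂_s)/2. -/

import Mathlib

open MeasureTheory ProbabilityTheory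

/-- Covariance of two real random variables. -/
noncomputable def cov {Ω : Type*} [MeasurableSpace Ω] (P : Measure Ω) (X Y : Ω → ℝ) : ℝ :=
  ∫ ω, (X ω - ∫ ω', X ω' ∂P) * (Y ω - ∫ ω', Y ω' ∂P) ∂P

lemma cov_eq_var {Ω : Type*} [MeasurableSpace Ω] (P : Measure Ω) [IsProbabilityMeasure P]
    {X Y : Ω → ℝ} (hX : MemLp X 2 P) (hY : MemLp Y 2 P) :
    cov P X Y = (variance X P + variance Y P - variance (X - Y) P) / 2 := by
  set mX := ∫ ω', X ω' ∂P with hmX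
  set mY := ∫ ω', Y ω' ∂P with hmY
  have hXc : MemLp (fun ω => X ω - mX) 2 P := hX.sub (memLp_const mX)
  have hYc : MemLp (fun ω => Y ω - mY) 2 P := hY.sub (memLp_const mY)
  have hXYc : MemLp (fun ω => (X ω - mX) - (Y ω - mY)) 2 P := hXc.sub hYc
  have hmXY : ∫ ω', (X - Y) ω' ∂P = mX - mY := by
    simp only [Pi.sub_apply]
    rw [integral_sub (hX.integrable one_le_two) (hY.integrable one_le_two)]
  have hvX : variance X P = ∫ ω, (X ω - mX) ^ 2 ∂P := by
    rw [variance_eq_integral hX.aemeasurable]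
  have hvY : variance Y P = ∫ ω, (Y ω - mY) ^ 2 ∂P := by
    rw [variance_eq_integral hY.aemeasurable]
  have hvXY : variance (X - Y) P = ∫ ω, ((X ω - mX) - (Y ω - mY)) ^ 2 ∂P := by
    rw [variance_eq_integral (hX.sub hY).aemeasurable, hmXY]
    congr 1; funext ω; simp [Pi.sub_apply]; ring
  have key : cov P X Y
      = ∫ ω, ((X ω - mX) ^ 2 + (Y ω - mY) ^ 2 - ((X ω - mX) - (Y ω - mY)) ^ 2) / 2 ∂P := by
    unfold cov
    congr 1; funext ω; ring
  have hadd : Integrable (fun ω => (X ω - mX) ^ 2 + (Y ω - mY) ^ 2) P :=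
    hXc.integrable_sq.add hYc.integrable_sq
  rw [key, integral_div, integral_sub hadd hXYc.integrable_sq,
      integral_add hXc.integrable_sq hYc.integrable_sq, hvX, hvY, hvXY]

theorem stmt1 {Ω : Type*} [MeasurableSpace Ω] (P : Measure Ω) [IsProbabilityMeasure P]
    (τr τs τrs τrns τsnr : Ω → ℝ) (θ hatr hats hatrs hatrns hatsnr : ℝ)
    (hθ : 0 ≤ θ) (hhatr : 0 ≤ hatr) (hhats : 0 ≤ hats) (hhatrs : 0 ≤ hatrs)
    (hhatrns : 0 ≤ hatrns) (hhatsnr : 0 ≤ hatsnr)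
    (hdecr : ∀ ω, τr ω = τrs ω + τrns ω)
    (hdecs : ∀ ω, τs ω = τrs ω + τsnr ω)
    (hm1 : MemLp τrs 2 P) (hm2 : MemLp τrns 2 P) (hm3 : MemLp τsnr 2 P)
    (hi1 : IndepFun τrs τrns P) (hi2 : IndepFun τrs τsnr P) (hi3 : IndepFun τrns τsnr P)
    (hvr : variance τr P = θ ^ 2 * hatr ^ 2)
    (hvs : variance τs P = θ ^ 2 * hats ^ 2)
    (hvrns : variance τrns P = θ ^ 2 * hatr * hatrns)
    (hvsnr : variance τsnr P = θ ^ 2 * hats * hatsnr)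
    (hhr : hatr = hatrs + hatrns) (hhs : hats = hatrs + hatsnr) :
    cov P τr τs = θ ^ 2 * hatrs * (hatr + hats) / 2 := by
  have hmr : MemLp τr 2 P := by
    have : τr = τrs + τrns := funext hdecr
    rw [this]; exact hm1.add hm2
  have hms : MemLp τs 2 P := by
    have : τs = τrs + τsnr := funext hdecs
    rw [this]; exact hm1.add hm3
  have hdiff : τr - τs = τrns - τsnr := by
    funext ω; simp [Pi.sub_apply, hdecr ω, hdecs ω]
  have hvdiff : variance (τr - τs) P = variance τrns P + variance τsnr P := by
    rw [hdiff]
    have hneg : variance (-τsnr) P = variance τsnr P := by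
      rw [show -τsnr = (-1 : ℝ) • τsnr by funext ω; simp, variance_smul]; ring
    rw [sub_eq_add_neg, hi3.neg_right.variance_add hm2 hm3.neg, hneg]
  rw [cov_eq_var P hmr hms, hvdiff, hvr, hvs, hvrns, hvsnr, hhr, hhs]
  ring
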